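/- Let (Ω, ℱ, P) be a probability space, Y : Ω → ℝ an integrable random variable, and m ∈ ℝ with P(Y > m) = 1/2 and P(Y < m) = 1/2. Fix s₀ ∈ ℝ and γ ≥ 0. Let 𝒮 be the set of real numbers E[−S·Y] as S ranges over all measurable functions S : Ω → ℝ with s₀ − γ ≤ S ≤ s₀ + γ almost surely and E[S] = s₀. Then E[−s₀·Y] + γ·E[Y·(𝟙{Y > m} − 𝟙{Y < m})] is the greatest element of 𝒮: it is an upper bound for 𝒮, and it is attained by the feasible choice S* = s₀ − γ on {Y > m} and S* = s₀ + γ on {Y ≤ m}. -/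

import Mathlib

open MeasureTheory

/-- maximization half of Proposition 1 (continuous outcome, single stratum).
Among all measurable scores `S` with `s₀ - γ ≤ S ≤ s₀ + γ` a.s. and `E[S] = s₀`, the
quantity `E[-S⬝Y]` is maximized at the value
`E[-s₀⬝Y] + γ⬝E[Y⬝(𝟙{Y > m} - 𝟙{Y < m})]`, attained by the choice
`S* = s₀ - γ` on `{Y > m}` and `S* = s₀ + γ` on `{Y ≤ m}`. -/
theorem ade_upper_bound_continuous_outcome
    {Ω : Type*} [MeasurableSpace Ω] (P : Measure Ω) [IsProbabilityMeasure P]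
    (Y : Ω → ℝ) (hYm : Measurable Y) (hY : Integrable Y P) (m : ℝ)
    (hgt : P {ω | m < Y ω} = 1/2) (hlt : P {ω | Y ω < m} = 1/2)
    (s₀ γ : ℝ) (hγ : 0 ≤ γ) :
    IsGreatest
      {v : ℝ | ∃ S : Ω → ℝ, Measurable S ∧
        (∀ᵐ ω ∂P, s₀ - γ ≤ S ω ∧ S ω ≤ s₀ + γ) ∧
        (∫ ω, S ω ∂P = s₀) ∧
        v = ∫ ω, -(S ω * Y ω) ∂P}
      ((∫ ω, -(s₀ * Y ω) ∂P) +
        γ * ∫ ω, Y ω * ((if m < Y ω then (1:ℝ) else 0) - (if Y ω < m then (1:ℝ) else 0)) ∂P)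
    ∧
    (Measurable (fun ω => if m < Y ω then s₀ - γ else s₀ + γ) ∧
      (∀ᵐ ω ∂P, s₀ - γ ≤ (if m < Y ω then s₀ - γ else s₀ + γ) ∧
        (if m < Y ω then s₀ - γ else s₀ + γ) ≤ s₀ + γ) ∧
      (∫ ω, (if m < Y ω then s₀ - γ else s₀ + γ) ∂P = s₀) ∧
      (∫ ω, -((if m < Y ω then s₀ - γ else s₀ + γ) * Y ω) ∂P =
        (∫ ω, -(s₀ * Y ω) ∂P) +
          γ * ∫ ω, Y ω * ((if m < Y ω then (1:ℝ) else 0) - (if Y ω < m then (1:ℝ) else 0)) ∂P)) := by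
  classical
  set χ : Ω → ℝ := fun ω => if m < Y ω then 1 else -1 with hχdef
  have hAmeas : MeasurableSet {ω | m < Y ω} := measurableSet_lt measurable_const hYm
  have hBmeas : MeasurableSet {ω | Y ω < m} := measurableSet_lt hYm measurable_const
  have hχmeas : Measurable χ := Measurable.ite hAmeas measurable_const measurable_const
  have hχbd : ∀ ω, ‖χ ω‖ ≤ 1 := by
    intro ω; simp only [hχdef, Real.norm_eq_abs]; split <;> norm_num
  have hχint : Integrable χ P :=
    (integrable_const (1:ℝ)).mono' hχmeas.aestronglyMeasurable
      (Filter.Eventually.of_forall hχbd)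
  -- ∫ χ = 0
  have hχ0 : ∫ ω, χ ω ∂P = 0 := by
    have hrepr : χ = fun ω => Set.indicator {ω | m < Y ω} (fun _ => (2:ℝ)) ω + (-1) := by
      funext ω
      by_cases h : m < Y ω <;> simp [hχdef, Set.indicator_apply, h] <;> norm_num
    rw [show (fun ω => χ ω) = χ from rfl, hrepr]
    rw [integral_add ((integrable_const (2:ℝ)).indicator hAmeas) (integrable_const (-1:ℝ)),
      integral_indicator_const _ hAmeas, integral_const, measureReal_def, hgt]
    simp [ENNReal.toReal_div]
  -- P(Y = m) = 0
  have hdisj : Disjoint {ω | m < Y ω} {ω | Y ω < m} := by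
    rw [Set.disjoint_left]
    intro ω h1 h2
    exact absurd (lt_trans h1 h2) (lt_irrefl m)
  have hunion : P ({ω | m < Y ω} ∪ {ω | Y ω < m}) = 1 := by
    rw [measure_union hdisj hBmeas, hgt, hlt]
    rw [ENNReal.div_add_div_same, one_add_one_eq_two, ENNReal.div_self two_ne_zero ENNReal.ofNat_ne_top]
  have hYne : ∀ᵐ ω ∂P, Y ω ≠ m := by
    rw [ae_iff]
    have hset : {ω | ¬ Y ω ≠ m} = ({ω | m < Y ω} ∪ {ω | Y ω < m})ᶜ := by
      ext ω
      simp only [Set.mem_setOf_eq, not_not, Set.mem_compl_iff, Set.mem_union, not_or, not_lt]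
      exact ⟨fun h => ⟨h.le, h.ge⟩, fun h => le_antisymm h.1 h.2⟩
    rw [hset, measure_compl (hAmeas.union hBmeas) (measure_ne_top _ _), hunion, measure_univ,
      tsub_self]
  -- χ * (Y - m) = |Y - m|
  have key1 : ∀ ω, χ ω * (Y ω - m) = |Y ω - m| := by
    intro ω
    by_cases h : m < Y ω
    · simp [hχdef, h, abs_of_pos (sub_pos.2 h)]
    · rw [not_lt] at h
      simp only [hχdef, if_neg (not_lt.2 h)]
      rw [abs_of_nonpos (sub_nonpos.2 h)]
      ring
  have hD : Integrable (fun ω => Y ω - m) P := hY.sub (integrable_const m)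
  have hχY_int : Integrable (fun ω => χ ω * Y ω) P :=
    hY.bdd_mul hχmeas.aestronglyMeasurable (Filter.Eventually.of_forall hχbd)
  have hχY : ∫ ω, χ ω * Y ω ∂P = ∫ ω, |Y ω - m| ∂P := by
    have heq : ∀ ω, χ ω * Y ω = |Y ω - m| + m * χ ω := by
      intro ω; rw [← key1 ω]; ring
    simp_rw [heq]
    rw [integral_add hD.abs (hχint.const_mul m), integral_const_mul, hχ0]
    ring
  -- the statement's integrand equals χ·Y a.e.
  have hg : (∫ ω, Y ω * ((if m < Y ω then (1:ℝ) else 0) - (if Y ω < m then (1:ℝ) else 0)) ∂P)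
      = ∫ ω, χ ω * Y ω ∂P := by
    refine integral_congr_ae ?_
    filter_upwards [hYne] with ω hω
    rcases lt_or_gt_of_ne hω with h | h
    · have h1 : ¬ m < Y ω := not_lt.2 (le_of_lt h)
      simp [hχdef, h, h1]
    · have h1 : ¬ Y ω < m := not_lt.2 (le_of_lt h)
      simp [hχdef, h, h1]
  -- the maximizer S*
  have hSstar_eq : (fun ω => if m < Y ω then s₀ - γ else s₀ + γ) = fun ω => s₀ - γ * χ ω := by
    funext ω
    by_cases h : m < Y ω <;> simp [hχdef, h] <;> try ring
  have hSstar_meas : Measurable (fun ω => if m < Y ω then s₀ - γ else s₀ + γ) :=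
    Measurable.ite hAmeas measurable_const measurable_const
  have hSstar_bd : ∀ ω, s₀ - γ ≤ (if m < Y ω then s₀ - γ else s₀ + γ) ∧
      (if m < Y ω then s₀ - γ else s₀ + γ) ≤ s₀ + γ := by
    intro ω
    by_cases h : m < Y ω <;> simp [h] <;> linarith
  have hSstar_int : Integrable (fun ω => if m < Y ω then s₀ - γ else s₀ + γ) P := by
    rw [hSstar_eq]
    exact (integrable_const s₀).sub (hχint.const_mul γ)
  have hSstar_mean : ∫ ω, (if m < Y ω then s₀ - γ else s₀ + γ) ∂P = s₀ := by
    rw [hSstar_eq, integral_sub (integrable_const s₀) (hχint.const_mul γ),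
      integral_const_mul, hχ0, integral_const]
    simp
  have hSstar_val : ∫ ω, -((if m < Y ω then s₀ - γ else s₀ + γ) * Y ω) ∂P =
      (∫ ω, -(s₀ * Y ω) ∂P) +
        γ * ∫ ω, Y ω * ((if m < Y ω then (1:ℝ) else 0) - (if Y ω < m then (1:ℝ) else 0)) ∂P := by
    rw [hg]
    have heq : ∀ ω, -((if m < Y ω then s₀ - γ else s₀ + γ) * Y ω)
        = -(s₀ * Y ω) + γ * (χ ω * Y ω) := by
      intro ω
      rw [show (if m < Y ω then s₀ - γ else s₀ + γ) = s₀ - γ * χ ω from congrFun hSstar_eq ω]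
      ring
    simp_rw [heq]
    rw [integral_add ((hY.const_mul s₀).neg') (hχY_int.const_mul γ), integral_const_mul]
  refine ⟨⟨⟨fun ω => if m < Y ω then s₀ - γ else s₀ + γ, hSstar_meas,
      Filter.Eventually.of_forall hSstar_bd, hSstar_mean, hSstar_val.symm⟩, ?_⟩,
    hSstar_meas, Filter.Eventually.of_forall hSstar_bd, hSstar_mean, hSstar_val⟩
  -- upper bound
  rintro v ⟨S, hSmeas, hSae, hSmean, rfl⟩
  have hSbd : ∀ᵐ ω ∂P, ‖S ω‖ ≤ |s₀| + γ := by
    filter_upwards [hSae] with ω hω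
    rw [Real.norm_eq_abs, abs_le]
    constructor
    · have := neg_abs_le s₀; linarith [hω.1]
    · have := le_abs_self s₀; linarith [hω.2]
  have hSint : Integrable S P :=
    (integrable_const (|s₀| + γ)).mono' hSmeas.aestronglyMeasurable hSbd
  have hSY_int : Integrable (fun ω => S ω * Y ω) P :=
    hY.bdd_mul hSmeas.aestronglyMeasurable hSbd
  have hTbd : ∀ᵐ ω ∂P, ‖s₀ - S ω‖ ≤ γ := by
    filter_upwards [hSae] with ω hω
    rw [Real.norm_eq_abs, abs_le]
    constructor <;> linarith [hω.1, hω.2]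
  have hTD_int : Integrable (fun ω => (s₀ - S ω) * (Y ω - m)) P :=
    hD.bdd_mul (measurable_const.sub hSmeas).aestronglyMeasurable hTbd
  have hstep : ∫ ω, (s₀ - S ω) * (Y ω - m) ∂P ≤ γ * ∫ ω, |Y ω - m| ∂P := by
    rw [← integral_const_mul]
    refine integral_mono_ae hTD_int (hD.abs.const_mul γ) ?_
    filter_upwards [hTbd] with ω hω
    calc (s₀ - S ω) * (Y ω - m) ≤ |(s₀ - S ω) * (Y ω - m)| := le_abs_self _
      _ = |s₀ - S ω| * |Y ω - m| := abs_mul _ _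
      _ ≤ γ * |Y ω - m| := by
          refine mul_le_mul_of_nonneg_right ?_ (abs_nonneg _)
          simpa [Real.norm_eq_abs] using hω
  have hTD_eq : ∫ ω, (s₀ - S ω) * (Y ω - m) ∂P
      = s₀ * (∫ ω, Y ω ∂P) - ∫ ω, S ω * Y ω ∂P := by
    have heq : ∀ ω, (s₀ - S ω) * (Y ω - m)
        = (s₀ * Y ω - S ω * Y ω) + (m * S ω - m * s₀) := by intro ω; ring
    simp_rw [heq]
    have i1 : Integrable (fun ω => s₀ * Y ω - S ω * Y ω) P := (hY.const_mul s₀).sub hSY_int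
    have i2 : Integrable (fun ω => m * S ω - m * s₀) P :=
      (hSint.const_mul m).sub (integrable_const _)
    rw [integral_add i1 i2, integral_sub (hY.const_mul s₀) hSY_int,
      integral_sub (hSint.const_mul m) (integrable_const _),
      integral_const_mul, integral_const_mul, hSmean, integral_const]
    simp
  have h1 : ∫ ω, -(S ω * Y ω) ∂P = - ∫ ω, S ω * Y ω ∂P := by
    rw [integral_neg]
  have h2 : ∫ ω, -(s₀ * Y ω) ∂P = -(s₀ * ∫ ω, Y ω ∂P) := by
    rw [integral_neg, integral_const_mul]
  rw [hg, hχY, h1, h2]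
  linarith [hstep, hTD_eq.symm.le, hTD_eq.le]
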